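/- Measuring implies the negation of Weak Club Guessing: if for every club-sequence ⟨C_δ : δ ∈ Lim(ω1)⟩ there is a club of ω1 measuring it, then there is no ladder system ⟨L_δ : δ ∈ Lim(ω1)⟩ such that every club of ω1 has infinite intersection with some L_δ. -/

import Mathlib

/-- `ω₁` as an ordinal. -/
noncomputable def omega1 : Ordinal := (Cardinal.aleph 1).ord

/-- `C` is a club of the ordinal `δ`: a subset of `δ` that is cofinal in `δ` and
closed (every nonzero `β < δ` which is a limit of elements of `C` belongs to `C`). -/
def IsClubIn (δ : Ordinal) (C : Set Ordinal) : Prop :=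
  C ⊆ Set.Iio δ ∧
  (∀ β < δ, ∃ γ ∈ C, β ≤ γ) ∧
  (∀ β < δ, 0 < β → (∀ γ < β, ∃ c ∈ C, γ < c ∧ c < β) → β ∈ C)

/-- `L` is a ladder on the limit ordinal `δ`: a cofinal subset of `δ` of
order type `ω`. -/
def IsLadderOn (δ : Ordinal) (L : Set Ordinal) : Prop :=
  ∃ f : ℕ → Ordinal, StrictMono f ∧ Set.range f = L ∧
    (∀ n, f n < δ) ∧ (∀ β < δ, ∃ n, β ≤ f n)

/-! ### Auxiliary material: transfer of countable ordinals between universes -/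

theorem omega1_lift.{u'} : Ordinal.lift.{u', 0} omega1.{0} = omega1.{u'} := by
  rw [omega1, omega1, Cardinal.lift_ord, Cardinal.lift_aleph, Ordinal.lift_one]

theorem omega1_isLimit.{u'} : Order.IsSuccLimit omega1.{u'} :=
  Cardinal.isSuccLimit_ord (Cardinal.aleph0_le_aleph 1)

open Classical in
/-- Projection of a countable ordinal to universe `0`. -/
noncomputable def odown.{u'} (x : Ordinal.{u'}) : Ordinal.{0} :=
  if h : ∃ y : Ordinal.{0}, Ordinal.lift.{u', 0} y = x then h.choose else 0

theorem lift_odown.{u'} {x : Ordinal.{u'}} (hx : x < omega1.{u'}) :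
    Ordinal.lift.{u', 0} (odown x) = x := by
  have h : ∃ y : Ordinal.{0}, Ordinal.lift.{u', 0} y = x := by
    exact Ordinal.mem_range_lift_of_le (a := omega1.{0}) (by rw [omega1_lift]; exact hx.le)
  rw [odown, dif_pos h]
  exact h.choose_spec

theorem odown_lt.{u'} {x : Ordinal.{u'}} (hx : x < omega1.{u'}) :
    odown x < omega1.{0} := by
  have h := lift_odown hx
  rw [← omega1_lift.{u'}, ← h] at hx
  exact Ordinal.lift_lt.mp hx

/-- Transfer of a countable ordinal from universe `u'` to universe `v'`. -/
noncomputable def otr.{u', v'} (x : Ordinal.{u'}) : Ordinal.{v'} :=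
  Ordinal.lift.{v', 0} (odown x)

theorem otr_lt_omega1.{u', v'} {x : Ordinal.{u'}} (hx : x < omega1.{u'}) :
    otr.{u', v'} x < omega1.{v'} := by
  rw [otr, ← omega1_lift.{v'}]
  exact Ordinal.lift_lt.mpr (odown_lt hx)

theorem otr_otr.{u', v'} {x : Ordinal.{u'}} (hx : x < omega1.{u'}) :
    otr.{v', u'} (otr.{u', v'} x) = x := by
  have h1 : otr.{u', v'} x < omega1.{v'} := otr_lt_omega1 hx
  have h3 : odown (otr.{u', v'} x) = odown x :=
    Ordinal.lift_inj.{v', 0}.mp (by rw [lift_odown h1]; rfl)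
  show Ordinal.lift.{u', 0} (odown (otr.{u', v'} x)) = x
  rw [h3]
  exact lift_odown hx

theorem otr_lt_iff.{u', v'} {x y : Ordinal.{u'}} (hx : x < omega1.{u'})
    (hy : y < omega1.{u'}) : otr.{u', v'} x < otr.{u', v'} y ↔ x < y := by
  rw [otr, otr, Ordinal.lift_lt, ← Ordinal.lift_lt.{u', 0}, lift_odown hx, lift_odown hy]

theorem otr_le_iff.{u', v'} {x y : Ordinal.{u'}} (hx : x < omega1.{u'})
    (hy : y < omega1.{u'}) : otr.{u', v'} x ≤ otr.{u', v'} y ↔ x ≤ y := by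
  rw [otr, otr, Ordinal.lift_le, ← Ordinal.lift_le.{u', 0}, lift_odown hx, lift_odown hy]

theorem otr_isLimit.{u', v'} {x : Ordinal.{u'}} (hx : x < omega1.{u'})
    (h : Order.IsSuccLimit x) : Order.IsSuccLimit (otr.{u', v'} x) := by
  rw [otr]
  apply Ordinal.isSuccLimit_lift.mpr
  apply (Ordinal.isSuccLimit_lift.{u', 0}).mp
  rw [lift_odown hx]
  exact h

theorem otr_zero.{u', v'} : otr.{u', v'} (0 : Ordinal.{u'}) = 0 := by
  have hd : odown (0 : Ordinal.{u'}) = 0 := by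
    apply Ordinal.lift_inj.{u', 0}.mp
    rw [Ordinal.lift_zero]
    exact lift_odown omega1_isLimit.pos
  rw [otr, hd, Ordinal.lift_zero]

theorem otr_pos.{u', v'} {x : Ordinal.{u'}} (hx : x < omega1.{u'}) (h : 0 < x) :
    0 < otr.{u', v'} x := by
  have := (otr_lt_iff.{u', v'} omega1_isLimit.pos hx).mpr h
  rwa [otr_zero] at this

/-- Transfer of a set of countable ordinals between universes. -/
def trSet.{u', v'} (S : Set Ordinal.{u'}) : Set Ordinal.{v'} :=
  {y : Ordinal.{v'} | y < omega1.{v'} ∧ otr.{v', u'} y ∈ S}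

theorem trSet_trSet.{u', v'} {S : Set Ordinal.{u'}} (hS : S ⊆ Set.Iio omega1) :
    trSet.{v', u'} (trSet.{u', v'} S) = S := by
  ext x
  constructor
  · rintro ⟨hx, _, hx2⟩
    rwa [otr_otr hx] at hx2
  · intro hx
    have hxω : x < omega1 := hS hx
    refine ⟨hxω, otr_lt_omega1 hxω, ?_⟩
    rwa [otr_otr hxω]

theorem trSet_inter.{u', v'} (A B : Set Ordinal.{u'}) :
    trSet.{u', v'} (A ∩ B) = trSet.{u', v'} A ∩ trSet.{u', v'} B := by
  ext y
  constructor
  · rintro ⟨hy, hA, hB⟩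
    exact ⟨⟨hy, hA⟩, hy, hB⟩
  · rintro ⟨⟨hy, hA⟩, _, hB⟩
    exact ⟨hy, hA, hB⟩

theorem trSet_infinite.{u', v'} {S : Set Ordinal.{u'}} (hS : S ⊆ Set.Iio omega1)
    (h : S.Infinite) : (trSet.{u', v'} S).Infinite := by
  have hIm : (otr.{u', v'} '' S).Infinite := by
    refine h.image ?_
    intro x1 hx1 x2 hx2 heq
    have h1 := otr_otr.{u', v'} (hS hx1)
    have h2 := otr_otr.{u', v'} (hS hx2)
    rw [← h1, ← h2, heq]
  refine hIm.mono ?_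
  rintro y ⟨x, hx, rfl⟩
  have hxω : x < omega1 := hS hx
  refine ⟨otr_lt_omega1 hxω, ?_⟩
  rwa [otr_otr hxω]

theorem trSet_ladder.{u', v'} {δ : Ordinal.{u'}} {C : Set Ordinal.{u'}}
    (hδ : δ < omega1.{u'}) (h : IsLadderOn δ C) :
    IsLadderOn (otr.{u', v'} δ) (trSet.{u', v'} C) := by
  obtain ⟨f, hmono, hran, hflt, hfcof⟩ := h
  have hfω : ∀ n, f n < omega1 := fun n => lt_trans (hflt n) hδ
  refine ⟨fun n => otr.{u', v'} (f n), ?_, ?_, ?_, ?_⟩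
  · intro a b hab
    exact (otr_lt_iff (hfω a) (hfω b)).mpr (hmono hab)
  · ext y
    constructor
    · rintro ⟨n, rfl⟩
      refine ⟨otr_lt_omega1 (hfω n), ?_⟩
      rw [otr_otr (hfω n), ← hran]
      exact ⟨n, rfl⟩
    · rintro ⟨hy, hy2⟩
      rw [← hran] at hy2
      obtain ⟨n, hn⟩ := hy2
      refine ⟨n, ?_⟩
      show otr.{u', v'} (f n) = y
      rw [hn, otr_otr hy]
  · intro n
    exact (otr_lt_iff (hfω n) hδ).mpr (hflt n)
  · intro β hβ
    have hβω : β < omega1 := lt_trans hβ (otr_lt_omega1 hδ)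
    have hβ' : otr.{v', u'} β < δ := by
      have := (otr_lt_iff.{v', u'} hβω (otr_lt_omega1 hδ)).mpr hβ
      rwa [otr_otr hδ] at this
    obtain ⟨n, hn⟩ := hfcof _ hβ'
    refine ⟨n, ?_⟩
    have := (otr_le_iff.{u', v'} (lt_trans hβ' hδ) (hfω n)).mpr hn
    rwa [otr_otr hβω] at this

/-- A ladder on `δ` is a club of `δ`. -/
theorem ladder_isClubIn {δ : Ordinal} {L : Set Ordinal} (h : IsLadderOn δ L) :
    IsClubIn δ L := by
  obtain ⟨f, hmono, hran, hlt, hcof⟩ := h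
  refine ⟨?_, ?_, ?_⟩
  · intro x hx
    rw [← hran] at hx
    obtain ⟨n, rfl⟩ := hx
    exact hlt n
  · intro β hβ
    obtain ⟨n, hn⟩ := hcof β hβ
    exact ⟨f n, by rw [← hran]; exact ⟨n, rfl⟩, hn⟩
  · intro β hβ hβ0 hcl
    exfalso
    obtain ⟨n, hn⟩ := hcof β hβ
    have hex : ∃ m, β ≤ f m := ⟨n, hn⟩
    classical
    let m := Nat.find hex
    have hm : β ≤ f m := Nat.find_spec hex
    rcases Nat.eq_zero_or_pos m with hm0 | hmpos
    · obtain ⟨c, hc, hc0, hcβ⟩ := hcl 0 hβ0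
      rw [← hran] at hc
      obtain ⟨i, rfl⟩ := hc
      have : β ≤ f i := by
        calc β ≤ f m := hm
        _ = f 0 := by rw [hm0]
        _ ≤ f i := hmono.monotone (Nat.zero_le i)
      exact absurd hcβ (not_lt_of_ge this)
    · obtain ⟨j, hj⟩ := Nat.exists_eq_add_of_lt hmpos
      have hmj : m = j + 1 := by omega
      have hfj : f j < β := by
        by_contra hcon
        push_neg at hcon
        exact Nat.find_min hex (m := j) (by omega) hcon
      obtain ⟨c, hc, hc1, hc2⟩ := hcl (f j) hfj
      rw [← hran] at hc
      obtain ⟨i, rfl⟩ := hc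
      have hji : j < i := (hmono.lt_iff_lt (a := j) (b := i)).mp hc1
      have : β ≤ f i := le_trans hm (by rw [hmj]; exact hmono.monotone hji)
      exact absurd hc2 (not_lt_of_ge this)

/-- The set of limit points (in `D`) of a set `D` of countable ordinals. -/
def accSet (D : Set Ordinal) : Set Ordinal :=
  {β | β < omega1 ∧ 0 < β ∧ ∀ γ < β, ∃ d ∈ D, γ < d ∧ d < β}

theorem accSet_subset {D : Set Ordinal} (hD : IsClubIn omega1 D) :
    accSet D ⊆ D := fun β hβ => hD.2.2 β hβ.1 hβ.2.1 hβ.2.2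

/-- The set of limit points of a club of `ω₁` is itself a club of `ω₁`. -/
theorem acc_isClubIn {D : Set Ordinal} (hD : IsClubIn omega1 D) :
    IsClubIn omega1 (accSet D) := by
  classical
  refine ⟨fun x hx => hx.1, ?_, ?_⟩
  · intro β hβ
    have step : ∀ x : Ordinal, ∃ y, y ∈ D ∧ (x < omega1 → x < y) := by
      intro x
      by_cases hx : x < omega1
      · have hx1 : x + 1 < omega1 := omega1_isLimit.succ_lt hx
        obtain ⟨y, hy, hle⟩ := hD.2.1 _ hx1
        exact ⟨y, hy, fun _ => lt_of_lt_of_le (Order.lt_succ x) hle⟩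
      · obtain ⟨y, hy, _⟩ := hD.2.1 β hβ
        exact ⟨y, hy, fun h => absurd h hx⟩
    choose nxt hnxtD hnxtlt using step
    obtain ⟨d0, hd0D, hd0β⟩ := hD.2.1 β hβ
    let d : ℕ → Ordinal := fun n => Nat.rec d0 (fun _ x => nxt x) n
    have hdD : ∀ n, d n ∈ D := by
      intro n
      induction n with
      | zero => exact hd0D
      | succ k ih => exact hnxtD _
    have hdlt1 : ∀ n, d n < omega1 := fun n => hD.1 (hdD n)
    have hdmono : ∀ n, d n < d (n + 1) := fun n => hnxtlt (d n) (hdlt1 n)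
    set γ := ⨆ n, d n with hγ
    have hγlt : γ < omega1 := by
      have hcof : omega1.cof = Cardinal.aleph 1 := Cardinal.isRegular_aleph_one.cof_eq
      refine Ordinal.iSup_lt_ord_lift ?_ hdlt1
      rw [hcof, Cardinal.mk_nat, Cardinal.lift_aleph0]
      exact Cardinal.aleph0_lt_aleph_one
    have hled : ∀ n, d n ≤ γ := Ordinal.le_iSup d
    have hltγ : ∀ n, d n < γ := fun n => lt_of_lt_of_le (hdmono n) (hled (n + 1))
    refine ⟨γ, ⟨hγlt, ?_, ?_⟩, le_trans hd0β (hled 0)⟩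
    · exact lt_of_le_of_lt (show (0 : Ordinal) ≤ d 0 from zero_le) (hltγ 0)
    · intro η hη
      rw [hγ, Ordinal.lt_iSup_iff] at hη
      obtain ⟨n, hn⟩ := hη
      exact ⟨d n, hdD n, hn, hltγ n⟩
  · intro β hβ hβ0 hcl
    refine ⟨hβ, hβ0, ?_⟩
    intro γ hγ
    obtain ⟨c, hc, hc1, hc2⟩ := hcl γ hγ
    exact ⟨c, accSet_subset hD hc, hc1, hc2⟩

/-- The transferred copy of a club of `ω₁` is a club of `ω₁`. -/
theorem trSet_isClubIn.{u', v'} {D : Set Ordinal.{u'}} (hD : IsClubIn omega1 D) :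
    IsClubIn omega1 (trSet.{u', v'} D) := by
  refine ⟨fun x hx => hx.1, ?_, ?_⟩
  · intro β hβ
    obtain ⟨γ, hγD, hγle⟩ := hD.2.1 (otr β) (otr_lt_omega1 hβ)
    have hγω : γ < omega1 := hD.1 hγD
    refine ⟨otr γ, ⟨otr_lt_omega1 hγω, by rwa [otr_otr hγω]⟩, ?_⟩
    have := (otr_le_iff (otr_lt_omega1 hβ) hγω).mpr hγle
    rwa [otr_otr hβ] at this
  · intro β hβ hβ0 hcl
    refine ⟨hβ, ?_⟩
    refine hD.2.2 (otr β) (otr_lt_omega1 hβ) (otr_pos hβ hβ0) ?_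
    intro γ' hγ'
    have hγ'ω : γ' < omega1 := lt_trans hγ' (otr_lt_omega1 hβ)
    have hγ'β : otr γ' < β := by
      have := (otr_lt_iff hγ'ω (otr_lt_omega1 hβ)).mpr hγ'
      rwa [otr_otr hβ] at this
    obtain ⟨c, hcE, hc1, hc2⟩ := hcl (otr γ') hγ'β
    have hcω : c < omega1 := hcE.1
    refine ⟨otr c, hcE.2, ?_, ?_⟩
    · have := (otr_lt_iff (otr_lt_omega1 hγ'ω) hcω).mpr hc1
      rwa [otr_otr hγ'ω] at this
    · exact (otr_lt_iff hcω hβ).mpr hc2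

/-- The combinatorial core: if `C` is a ladder on `δ`, `D` is a club of `ω₁`
whose set of limit points meets `C` in an infinite set, then `D` cannot measure
`C` at `δ`. -/
theorem wcg_core {D C : Set Ordinal} {δ : Ordinal}
    (hD : IsClubIn omega1 D) (hδω : δ < omega1) (hδlim : Order.IsSuccLimit δ)
    (hlad : IsLadderOn δ C) (hinf : (accSet D ∩ C).Infinite)
    (hmeas : δ ∈ D → ∃ α < δ,
      ((∀ x ∈ D, x < δ → α ≤ x → x ∈ C) ∨ (∀ x ∈ D, α ≤ x → x ∉ C))) : False := by
  classical
  have hsub : accSet D ⊆ D := accSet_subset hD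
  obtain ⟨f, hmono, hran, hflt, hfcof⟩ := hlad
  -- accSet D ∩ C is cofinal in δ
  have hIinf : {n : ℕ | f n ∈ accSet D}.Infinite := by
    intro hfin
    apply hinf
    have hss : accSet D ∩ C ⊆ f '' {n : ℕ | f n ∈ accSet D} := by
      rintro x ⟨hx1, hx2⟩
      rw [← hran] at hx2
      obtain ⟨n, rfl⟩ := hx2
      exact ⟨n, hx1, rfl⟩
    exact Set.Finite.subset (hfin.image f) hss
  have hcof : ∀ β < δ, ∃ x, x ∈ accSet D ∧ x ∈ C ∧ β ≤ x ∧ x < δ := by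
    intro β hβ
    obtain ⟨n, hn⟩ := hfcof β hβ
    have hexm : ∃ m ∈ {n : ℕ | f n ∈ accSet D}, n ≤ m := by
      by_contra hcon
      push_neg at hcon
      exact hIinf (Set.Finite.subset (Set.finite_Iio n) (fun m hm => hcon m hm))
    obtain ⟨m, hm, hnm⟩ := hexm
    exact ⟨f m, hm, by rw [← hran]; exact ⟨m, rfl⟩,
      le_trans hn (hmono.monotone hnm), hflt m⟩
  have hδD : δ ∈ D := by
    refine hD.2.2 δ hδω hδlim.pos ?_
    intro γ hγ
    obtain ⟨x, hx1, _, hx3, hx4⟩ := hcof (γ + 1) (hδlim.succ_lt hγ)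
    exact ⟨x, hsub hx1, lt_of_lt_of_le (Order.lt_succ γ) hx3, hx4⟩
  obtain ⟨α, hα, hcase⟩ := hmeas hδD
  rcases hcase with h1 | h2
  · -- every point of D in [α, δ) lies on the ladder: contradiction just below
    -- a limit point of D lying on the ladder
    have hmaxlt : max α (f 0) + 1 < δ := hδlim.succ_lt (max_lt hα (hflt 0))
    obtain ⟨x, hx1, hx2, hx3, hx4⟩ := hcof (max α (f 0) + 1) hmaxlt
    rw [← hran] at hx2
    obtain ⟨k, rfl⟩ := hx2
    have hgt : max α (f 0) < f k := lt_of_lt_of_le (Order.lt_succ _) hx3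
    have hk0 : 0 < k := by
      have : f 0 < f k := lt_of_le_of_lt (le_max_right α (f 0)) hgt
      exact hmono.lt_iff_lt.mp this
    obtain ⟨j, rfl⟩ : ∃ j, k = j + 1 := ⟨k - 1, by omega⟩
    have hαx : α < f (j + 1) := lt_of_le_of_lt (le_max_left α (f 0)) hgt
    have hjx : f j < f (j + 1) := hmono (Nat.lt_succ_self j)
    obtain ⟨d, hdD, hd1, hd2⟩ := hx1.2.2 (max α (f j)) (max_lt hαx hjx)
    have hdα : α ≤ d := le_of_lt (lt_of_le_of_lt (le_max_left _ _) hd1)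
    have hdL : d ∈ C := h1 d hdD (lt_trans hd2 hx4) hdα
    rw [← hran] at hdL
    obtain ⟨m, rfl⟩ := hdL
    have hm1 : j < m := hmono.lt_iff_lt.mp (lt_of_le_of_lt (le_max_right _ _) hd1)
    have hm2 : m < j + 1 := hmono.lt_iff_lt.mp hd2
    omega
  · obtain ⟨x, hx1, hx2, hx3, _⟩ := hcof α hα
    exact h2 x (hsub hx1) hx3 hx2

/-- Measuring implies the negation of Weak Club Guessing: if every
club-sequence `⟨C_δ : δ ∈ Lim(ω1)⟩` is measured by some club of `ω1`, then there is
no ladder system `⟨L_δ : δ ∈ Lim(ω1)⟩` such that every club of `ω1` has infinite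
intersection with some `L_δ`. -/
theorem measuring_implies_not_wcg
    (hMeasuring : ∀ Cseq : Ordinal → Set Ordinal,
      (∀ δ, δ < omega1 → Order.IsSuccLimit δ → IsClubIn δ (Cseq δ)) →
      ∃ D : Set Ordinal, IsClubIn omega1 D ∧
        ∀ δ ∈ D, Order.IsSuccLimit δ →
          ∃ α < δ, ((∀ x ∈ D, x < δ → α ≤ x → x ∈ Cseq δ) ∨
                    (∀ x ∈ D, α ≤ x → x ∉ Cseq δ))) :
    ¬ ∃ L : Ordinal → Set Ordinal,
        (∀ δ, δ < omega1 → Order.IsSuccLimit δ → IsLadderOn δ (L δ)) ∧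
        (∀ D : Set Ordinal, IsClubIn omega1 D →
          ∃ δ, δ < omega1 ∧ Order.IsSuccLimit δ ∧ (D ∩ L δ).Infinite) := by
  classical
  rintro ⟨L, hL, hWCG⟩
  -- `L` lives in a possibly different universe than the measuring hypothesis;
  -- transfer the ladder system along `otr`.
  have hCseqLadder : ∀ δ, δ < omega1 → Order.IsSuccLimit δ →
      IsLadderOn δ (trSet (L (otr δ))) := by
    intro δ hδ hδl
    have hlad := hL (otr δ) (otr_lt_omega1 hδ) (otr_isLimit hδ hδl)
    have := trSet_ladder (otr_lt_omega1 hδ) hlad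
    rwa [otr_otr hδ] at this
  obtain ⟨D, hD, hmeas⟩ := hMeasuring (fun δ => trSet (L (otr δ)))
    (fun δ hδ hδl => ladder_isClubIn (hCseqLadder δ hδ hδl))
  have hD' : IsClubIn omega1 (accSet D) := acc_isClubIn hD
  have hAsub : accSet D ⊆ Set.Iio omega1 := fun x hx => hx.1
  -- transfer the derived club `accSet D` to the universe of `L`
  obtain ⟨δ₂, hδ₂ω, hδ₂lim, hδ₂inf⟩ :=
    hWCG (trSet (accSet D)) (trSet_isClubIn hD')
  -- pull everything back
  have hδω : otr δ₂ < omega1 := otr_lt_omega1 hδ₂ω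
  have hδlim : Order.IsSuccLimit (otr δ₂) := otr_isLimit hδ₂ω hδ₂lim
  have htδ : otr (otr δ₂) = δ₂ := otr_otr hδ₂ω
  have hinf : (accSet D ∩ trSet (L (otr (otr δ₂)))).Infinite := by
    rw [htδ]
    have hsub2 : trSet (accSet D) ∩ L δ₂ ⊆ Set.Iio omega1 :=
      fun x hx => hx.1.1
    have h1 := trSet_infinite hsub2 hδ₂inf
    rw [trSet_inter, trSet_trSet hAsub] at h1
    exact h1.mono (Set.inter_subset_inter_right _ (fun x hx => hx))
  exact wcg_core hD hδω hδlim (hCseqLadder _ hδω hδlim) hinf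
    (fun hδD => hmeas _ hδD hδlim)
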